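/- Define v(n,m,k) = -t(n,m,k)/s(n,m) with s(n,m) = Σ_{i=0}^{m} C(n,i) b^{m-i} and t(n,m,k) = Σ_{i=1}^{k} r_{k+1-i} C(n-i,m), for b > -1 and nonnegative rewards r_i. Then for n > m > 0 and k > 0, with p = s(n-1,m-1)/s(n,m): v(n,m,k) = p·b·r_k + (1-p)·(v(n-1,m,k-1) - r_k). -/

import Mathlib

noncomputable def s (b : ℝ) (n m : ℕ) : ℝ :=
  ∑ i ∈ Finset.range (m + 1), (n.choose i : ℝ) * b ^ (m - i)

noncomputable def binom (a : ℤ) (c : ℕ) : ℝ :=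
  if 0 ≤ a then (a.toNat.choose c : ℝ) else 0

noncomputable def t (r : ℕ → ℝ) (n m k : ℕ) : ℝ :=
  ∑ i ∈ Finset.Icc 1 k, r (k + 1 - i) * binom ((n : ℤ) - i) m

/-- v(n,m,k) = -t(n,m,k)/s(n,m). -/
noncomputable def v (b : ℝ) (r : ℕ → ℝ) (n m k : ℕ) : ℝ :=
  -t r n m k / s b n m

lemma s_zero (b : ℝ) (n : ℕ) : s b n 0 = 1 := by simp [s]

lemma s_self (b : ℝ) (n : ℕ) : s b n n = (1 + b) ^ n := by
  rw [add_pow]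
  simp [s, mul_comm]

lemma s_pascal (b : ℝ) (n m : ℕ) : s b (n+1) (m+1) = s b n m + s b n (m+1) := by
  unfold s
  rw [Finset.sum_range_succ' (fun i => ((n+1).choose i : ℝ) * b ^ (m + 1 - i)) (m+1),
      Finset.sum_range_succ' (fun i => (n.choose i : ℝ) * b ^ (m + 1 - i)) (m+1)]
  simp only [Nat.succ_sub_succ, Nat.choose_zero_right, Nat.cast_one, Nat.sub_zero]
  have key : ∑ i ∈ Finset.range (m+1), ((n+1).choose (i+1) : ℝ) * b ^ (m - i)
      = ∑ i ∈ Finset.range (m+1), (n.choose i : ℝ) * b ^ (m - i)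
        + ∑ i ∈ Finset.range (m+1), (n.choose (i+1) : ℝ) * b ^ (m - i) := by
    rw [← Finset.sum_add_distrib]
    apply Finset.sum_congr rfl
    intro i _
    simp only [Nat.choose_succ_succ]
    push_cast
    ring
  rw [key]
  ring

lemma s_step (b : ℝ) (n m : ℕ) : s b n (m+1) = b * s b n m + (n.choose (m+1) : ℝ) := by
  unfold s
  rw [Finset.sum_range_succ, Finset.mul_sum]
  congr 1
  · apply Finset.sum_congr rfl
    intro i hi
    simp only [Finset.mem_range] at hi
    have : m + 1 - i = (m - i) + 1 := by omega
    rw [this]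
    ring
  · simp

lemma s_pos {b : ℝ} (hb : -1 < b) : ∀ n m : ℕ, m ≤ n → 0 < s b n m := by
  intro n
  induction n with
  | zero => intro m hm; interval_cases m; simp [s_zero]
  | succ n ih =>
    intro m hm
    rcases eq_or_lt_of_le hm with h | h
    · subst h
      rw [s_self]
      have : (0:ℝ) < 1 + b := by linarith
      positivity
    · match m with
      | 0 => simp [s_zero]
      | m+1 =>
        rw [s_pascal]
        have h1 := ih m (by omega)
        have h2 := ih (m+1) (by omega)
        linarith

lemma t_rec (r : ℕ → ℝ) (n m k : ℕ) :
    t r (n+1) m (k+1) = t r n m k + r (k+1) * binom (n : ℤ) m := by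
  unfold t
  rw [← Finset.Ico_add_one_right_eq_Icc, ← Finset.Ico_add_one_right_eq_Icc,
      Finset.sum_Ico_eq_sum_range, Finset.sum_Ico_eq_sum_range]
  simp only [Nat.add_sub_cancel]
  rw [Finset.sum_range_succ' (fun j => r (k + 1 + 1 - (1 + j)) * binom ((↑(n+1):ℤ) - ↑(1+j)) m) k]
  congr 1
  · apply Finset.sum_congr rfl
    intro j hj
    have h1 : k + 1 + 1 - (1 + (j+1)) = k + 1 - (1 + j) := by omega
    have h2 : ((↑(n+1):ℤ) - ↑(1+(j+1))) = ((n:ℤ) - ↑(1+j)) := by push_cast; ring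
    rw [h1, h2]
  · norm_num

/-- Indifference equation for the inspector's equilibrium mixed strategy. -/
theorem stmt_12 (n m k : ℕ) (b : ℝ) (r : ℕ → ℝ)
    (hb : -1 < b) (hm : 0 < m) (hmn : m < n) (hk : 0 < k)
    (hr : ∀ i, 0 ≤ r i)
    (p : ℝ) (hp : p = s b (n - 1) (m - 1) / s b n m) :
    v b r n m k = p * b * r k + (1 - p) * (v b r (n - 1) m (k - 1) - r k) := by
  obtain ⟨n', rfl⟩ : ∃ n', n = n' + 1 := ⟨n - 1, by omega⟩
  obtain ⟨m', rfl⟩ : ∃ m', m = m' + 1 := ⟨m - 1, by omega⟩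
  obtain ⟨k', rfl⟩ : ∃ k', k = k' + 1 := ⟨k - 1, by omega⟩
  simp only [Nat.add_sub_cancel] at hp ⊢
  subst hp
  have hApos : 0 < s b n' m' := s_pos hb n' m' (by omega)
  have hBpos : 0 < s b n' (m'+1) := s_pos hb n' (m'+1) (by omega)
  have hbinom : binom (n' : ℤ) (m'+1) = (n'.choose (m'+1) : ℝ) := by simp [binom]
  have ht : t r (n'+1) (m'+1) (k'+1)
      = t r n' (m'+1) k' + r (k'+1) * (n'.choose (m'+1) : ℝ) := by
    rw [t_rec, hbinom]
  have hS : s b (n'+1) (m'+1) = s b n' m' + s b n' (m'+1) := s_pascal b n' m'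
  have hstep : s b n' (m'+1) = b * s b n' m' + (n'.choose (m'+1) : ℝ) := s_step b n' m'
  unfold v
  rw [hS, ht]
  have hSpos : 0 < s b n' m' + s b n' (m'+1) := by linarith
  field_simp
  rw [hstep]
  ring
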